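/- Let q be a prime power and F_q the field with q elements, and let n, k, δ, α be positive integers with 1 ≤ δ ≤ k, k + δ ≤ n and α ≥ 2. Set K = max{k, n−k} · (min{k, n−k} − δ + 1). Then there exists a family W₁, …, W_N (repetitions allowed) of N = (α − 1)·q^K linear subspaces of F_q^n, each of dimension k, such that for any α distinct indices i₁ < ⋯ < i_α the subspaces W_{i₁}, …, W_{i_α} together span a subspace of dimension at least δ + k. In particular, the maximum size B_q(n,k,δ;α) of an α-(n,k,δ)_q^c covering Grassmannian code satisfies B_q(n,k,δ;α) ≥ (α−1)·q^{max{k,n−k}(min{k,n−k}−δ+1)}. -/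

import Mathlib

open Polynomial Module Matrix

/-- `X^q - X` divides `X^(q^b) - X` over any commutative ring, provided `q ≥ 1`. -/
lemma Xq_dvd {R : Type*} [CommRing R] (q b : ℕ) (hq : 1 ≤ q) :
    (X ^ q - X : R[X]) ∣ X ^ q ^ b - X := by
  have h1 : (X ^ q - X : R[X]) = X * (X ^ (q - 1) - 1) := by
    rw [mul_sub, mul_one, ← pow_succ', Nat.sub_add_cancel hq]
  have hqb : 1 ≤ q ^ b := Nat.one_le_pow _ _ hq
  have h2 : (X ^ q ^ b - X : R[X]) = X * (X ^ (q ^ b - 1) - 1) := by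
    rw [mul_sub, mul_one, ← pow_succ', Nat.sub_add_cancel hqb]
  rw [h1, h2]
  apply mul_dvd_mul_left
  obtain ⟨m, hm⟩ : q - 1 ∣ q ^ b - 1 := by
    simpa using Nat.sub_dvd_pow_sub_pow q 1 b
  rw [hm, pow_mul]
  simpa using sub_dvd_pow_sub_pow (X ^ (q - 1) : R[X]) 1 m

/-- Every finite field has a finite extension of any given degree `b ≥ 1`. -/
lemma exists_field_ext (F : Type*) [Field F] [Fintype F] (b : ℕ) (hb : b ≠ 0) :
    ∃ (L : Type) (_ : Field L) (_ : Algebra F L) (_ : Fintype L),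
      Module.finrank F L = b := by
  classical
  set p := ringChar F with hp
  haveI hcp : CharP F p := ringChar.charP F
  haveI hfp : Fact p.Prime := ⟨CharP.char_is_prime F p⟩
  obtain ⟨e, -, he⟩ := FiniteField.card F p
  letI : Algebra (ZMod p) F := ZMod.algebra F p
  haveI hsf : IsSplittingField (ZMod p) F (X ^ p ^ (e : ℕ) - X) :=
    FiniteField.isSplittingField_of_card_eq _ _ he
  set L := GaloisField p (e * b) with hL
  have heb : (e : ℕ) * b ≠ 0 := by positivity
  have hsplits : Splits ((X ^ p ^ (e : ℕ) - X : (ZMod p)[X]).map (algebraMap (ZMod p) L)) := by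
    have hbig : Splits ((X ^ p ^ ((e : ℕ) * b) - X : (ZMod p)[X]).map (algebraMap (ZMod p) L)) :=
      (Polynomial.IsSplittingField.splittingField _).splits'
    have hne : (X ^ p ^ ((e : ℕ) * b) - X : (ZMod p)[X]) ≠ 0 :=
      FiniteField.X_pow_card_pow_sub_X_ne_zero _ heb hfp.out.one_lt
    refine Splits.of_dvd hbig (Polynomial.map_ne_zero hne) (Polynomial.map_dvd _ ?_)
    rw [pow_mul]
    exact Xq_dvd _ _ (Nat.one_le_pow _ _ hfp.out.pos)
  have φ : F →ₐ[ZMod p] L := IsSplittingField.lift F (X ^ p ^ (e : ℕ) - X) hsplits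
  letI : Algebra F L := φ.toRingHom.toAlgebra
  haveI : Fintype L := Fintype.ofFinite L
  refine ⟨L, inferInstance, inferInstance, inferInstance, ?_⟩
  have hcard : Fintype.card L = p ^ ((e : ℕ) * b) := by
    rw [← Nat.card_eq_fintype_card]
    exact GaloisField.card p _ heb
  have hcard2 : Fintype.card L = p ^ ((e : ℕ) * Module.finrank F L) := by
    rw [card_eq_pow_finrank (K := F) (V := L), he, ← pow_mul]
  have := hcard.symm.trans hcard2
  have heq := Nat.pow_right_injective hfp.out.two_le this
  exact (Nat.eq_of_mul_eq_mul_left (by positivity) heq).symm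

/-- Gabidulin-type MRD code: a family of `q^(b*(a-δ+1))` linear maps
`(Fin a → F) → (Fin b → F)` (with `a ≤ b`) whose pairwise differences have rank `≥ δ`. -/
lemma exists_rank_code (F : Type*) [Field F] [Fintype F] (a b δ : ℕ)
    (hδ1 : 1 ≤ δ) (hδa : δ ≤ a) (hab : a ≤ b) :
    ∃ C : Fin (Fintype.card F ^ (b * (a - δ + 1))) → ((Fin a → F) →ₗ[F] (Fin b → F)),
      ∀ i j, i ≠ j → δ ≤ Module.finrank F (LinearMap.range (C i - C j)) := by
  classical
  set q := Fintype.card F with hq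
  have hq2 : 1 < q := Fintype.one_lt_card
  set t := a - δ + 1 with ht
  have hb0 : b ≠ 0 := by omega
  obtain ⟨L, _, _, _, hrank⟩ := exists_field_ext F b hb0
  haveI : FiniteDimensional F L := inferInstance
  -- characteristic facts
  set p := ringChar F with hp
  haveI hcpF : CharP F p := ringChar.charP F
  haveI hfp : Fact p.Prime := ⟨CharP.char_is_prime F p⟩
  haveI hcpL : CharP L p := charP_of_injective_algebraMap (algebraMap F L).injective p
  obtain ⟨e, -, he⟩ := FiniteField.card F p
  -- Frobenius additivity
  have hfrob : ∀ (i : ℕ) (x y : L), (x + y) ^ q ^ i = x ^ q ^ i + y ^ q ^ i := by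
    intro i x y
    rw [hq, he, ← pow_mul]
    exact add_pow_char_pow x y p ((e : ℕ) * i)
  have hsmul : ∀ (i : ℕ) (s : F) (x : L),
      (algebraMap F L s * x) ^ q ^ i = algebraMap F L s * x ^ q ^ i := by
    intro i s x
    rw [mul_pow, ← map_pow, FiniteField.pow_card_pow]
  -- linearized polynomial maps
  set fc : (Fin t → L) → (L →ₗ[F] L) := fun c =>
    { toFun := fun x => ∑ i : Fin t, c i * x ^ q ^ (i : ℕ)
      map_add' := by
        intro x y
        simp [hfrob, mul_add, Finset.sum_add_distrib]
      map_smul' := by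
        intro s x
        simp only [Algebra.smul_def, hsmul, RingHom.id_apply, Finset.mul_sum]
        congr 1; funext i; ring } with hfc
  have hfc_apply : ∀ (c : Fin t → L) (x : L), fc c x = ∑ i : Fin t, c i * x ^ q ^ (i : ℕ) :=
    fun c x => rfl
  have hfc_sub : ∀ (c c' : Fin t → L) (x : L), fc c x - fc c' x = fc (c - c') x := by
    intro c c' x
    simp [hfc_apply, sub_mul, Finset.sum_sub_distrib]
  -- kernel bound
  have hker : ∀ c : Fin t → L, c ≠ 0 →
      Module.finrank F (LinearMap.ker (fc c)) ≤ t - 1 := by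
    intro c hc
    set P : Polynomial L := ∑ i : Fin t, Polynomial.C (c i) * Polynomial.X ^ q ^ (i : ℕ)
      with hP
    obtain ⟨j, hj⟩ := Function.ne_iff.mp hc
    have hinj : ∀ i : Fin t, q ^ (i : ℕ) = q ^ (j : ℕ) → i = j := by
      intro i hi
      exact Fin.ext (Nat.pow_right_injective hq2 hi)
    have hcoeff : P.coeff (q ^ (j : ℕ)) = c j := by
      rw [hP, Polynomial.finset_sum_coeff]
      rw [Finset.sum_eq_single j]
      · simp [Polynomial.coeff_C_mul, Polynomial.coeff_X_pow]
      · intro i _ hij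
        simp only [Polynomial.coeff_C_mul, Polynomial.coeff_X_pow]
        rw [if_neg (fun h => hij (hinj i h.symm)), mul_zero]
      · simp
    have hP0 : P ≠ 0 := fun h => by simp [h] at hcoeff; exact hj hcoeff.symm
    have hdeg : P.natDegree ≤ q ^ (t - 1) := by
      refine Polynomial.natDegree_sum_le_of_forall_le _ _ ?_
      intro i _
      refine le_trans (Polynomial.natDegree_C_mul_le _ _) ?_
      refine le_trans (Polynomial.natDegree_X_pow_le _) ?_
      exact Nat.pow_le_pow_right (by omega) (by omega)
    -- each kernel element is a root of P
    have hroot : ∀ x : LinearMap.ker (fc c), (x : L) ∈ P.roots.toFinset := by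
      intro x
      rw [Multiset.mem_toFinset, Polynomial.mem_roots hP0]
      have hx := x.2
      rw [LinearMap.mem_ker] at hx
      have : P.eval (x : L) = fc c (x : L) := by
        simp [hP, hfc_apply, Polynomial.eval_finset_sum]
      simp [Polynomial.IsRoot, this, hx]
    have hcard : Fintype.card (LinearMap.ker (fc c)) ≤ q ^ (t - 1) := by
      have h1 : Fintype.card (LinearMap.ker (fc c)) ≤ P.roots.toFinset.card := by
        have hinj2 : Function.Injective
            (fun x : LinearMap.ker (fc c) => (⟨(x : L), hroot x⟩ : {y // y ∈ P.roots.toFinset})) :=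
          by intro x y hxy; exact Subtype.ext (Subtype.mk_eq_mk.mp hxy)
        calc Fintype.card (LinearMap.ker (fc c))
            ≤ Fintype.card {y // y ∈ P.roots.toFinset} := Fintype.card_le_of_injective _ hinj2
          _ = P.roots.toFinset.card := Fintype.card_coe _
      exact le_trans h1 (le_trans (Multiset.toFinset_card_le _)
        (le_trans (Polynomial.card_roots' P) hdeg))
    have hcard2 : Fintype.card (LinearMap.ker (fc c)) =
        q ^ Module.finrank F (LinearMap.ker (fc c)) := card_eq_pow_finrank
    rw [hcard2] at hcard
    exact (Nat.pow_le_pow_iff_right hq2).mp hcard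
  -- embedding of (Fin a → F) into L
  set bb : Basis (Fin b) F L := (Module.finBasis F L).reindex (finCongr hrank) with hbb
  set ez : (Fin a → F) →ₗ[F] (Fin b → F) :=
    { toFun := fun x j => if h : (j : ℕ) < a then x ⟨j, h⟩ else 0
      map_add' := by
        intro x y; funext j; by_cases h : (j : ℕ) < a <;> simp [h]
      map_smul' := by
        intro s x; funext j; by_cases h : (j : ℕ) < a <;> simp [h] } with hez
  have hez_inj : Function.Injective ez := by
    intro x y hxy
    funext i
    have := congrFun hxy (Fin.castLE hab i)
    simpa [hez, i.2] using this
  set g : (Fin a → F) →ₗ[F] L := bb.equivFun.symm.toLinearMap ∘ₗ ez with hg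
  have hg_inj : Function.Injective g := by
    intro x y hxy
    exact hez_inj (bb.equivFun.symm.injective hxy)
  -- the code maps
  set Ψ : (Fin t → L) → ((Fin a → F) →ₗ[F] (Fin b → F)) := fun c =>
    bb.equivFun.toLinearMap ∘ₗ (fc c) ∘ₗ g with hΨ
  have hΨ_sub : ∀ c c', Ψ c - Ψ c' = Ψ (c - c') := by
    intro c c'
    refine LinearMap.ext fun x => ?_
    show bb.equivFun (fc c (g x)) - bb.equivFun (fc c' (g x)) = bb.equivFun (fc (c - c') (g x))
    rw [← map_sub bb.equivFun, hfc_sub]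
  have hΨ_rank : ∀ c : Fin t → L, c ≠ 0 →
      δ ≤ Module.finrank F (LinearMap.range (Ψ c)) := by
    intro c hc
    have hrn := LinearMap.finrank_range_add_finrank_ker (Ψ c)
    rw [Module.finrank_fin_fun] at hrn
    -- bound the kernel
    have hkk : Module.finrank F (LinearMap.ker (Ψ c)) ≤ t - 1 := by
      have hmap : Submodule.map g (LinearMap.ker (Ψ c)) ≤ LinearMap.ker (fc c) := by
        rintro y ⟨x, hx, rfl⟩
        have hx' : Ψ c x = 0 := hx
        have h2 : bb.equivFun (fc c (g x)) = 0 := hx'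
        rw [LinearMap.mem_ker]
        exact bb.equivFun.map_eq_zero_iff.mp h2
      have heq : Module.finrank F (LinearMap.ker (Ψ c)) =
          Module.finrank F (Submodule.map g (LinearMap.ker (Ψ c))) :=
        LinearEquiv.finrank_eq (Submodule.equivMapOfInjective g hg_inj _)
      rw [heq]
      exact le_trans (Submodule.finrank_mono hmap) (hker c hc)
    omega
  -- index juggling
  have hcardL : Fintype.card L = q ^ b := by
    rw [card_eq_pow_finrank (K := F) (V := L), hrank]
  have hcardI : Fintype.card (Fin t → L) = q ^ (b * (a - δ + 1)) := by
    rw [Fintype.card_fun, hcardL, Fintype.card_fin, ← pow_mul, ht]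
  set E : (Fin t → L) ≃ Fin (q ^ (b * (a - δ + 1))) := Fintype.equivFinOfCardEq hcardI with hE
  refine ⟨fun i => Ψ (E.symm i), ?_⟩
  intro i j hij
  rw [hΨ_sub]
  apply hΨ_rank
  rw [sub_ne_zero]
  exact fun h => hij (E.symm.injective h)

/-- MRD codes in both shapes: maps `(Fin k → F) → (Fin m → F)` with exponent
`max k m * (min k m - δ + 1)`. -/
lemma exists_rank_code' (F : Type*) [Field F] [Fintype F] (k m δ : ℕ)
    (hδ1 : 1 ≤ δ) (hδk : δ ≤ k) (hδm : δ ≤ m) :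
    ∃ C : Fin (Fintype.card F ^ (max k m * (min k m - δ + 1))) →
        ((Fin k → F) →ₗ[F] (Fin m → F)),
      ∀ i j, i ≠ j → δ ≤ Module.finrank F (LinearMap.range (C i - C j)) := by
  classical
  rcases le_total k m with h | h
  · rw [Nat.max_eq_right h, Nat.min_eq_left h]
    exact exists_rank_code F k m δ hδ1 hδk h
  · rw [Nat.max_eq_left h, Nat.min_eq_right h]
    obtain ⟨C, hC⟩ := exists_rank_code F m k δ hδ1 hδm h
    set T : ((Fin m → F) →ₗ[F] (Fin k → F)) → ((Fin k → F) →ₗ[F] (Fin m → F)) :=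
      fun f => Matrix.toLin' (LinearMap.toMatrix' f)ᵀ with hT
    have hT_sub : ∀ f g, T f - T g = T (f - g) := by
      intro f g
      rw [hT]
      simp only [map_sub, Matrix.transpose_sub]
    have hT_rank : ∀ f : (Fin m → F) →ₗ[F] (Fin k → F),
        Module.finrank F (LinearMap.range (T f)) =
          Module.finrank F (LinearMap.range f) := by
      intro f
      have h1 : Module.finrank F (LinearMap.range (T f)) = ((LinearMap.toMatrix' f)ᵀ).rank := by
        rw [Matrix.rank, ← Matrix.toLin'_apply']
      have h2 : ((LinearMap.toMatrix' f)ᵀ).rank = (LinearMap.toMatrix' f).rank :=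
        Matrix.rank_transpose _
      have h3 : (LinearMap.toMatrix' f).rank = Module.finrank F (LinearMap.range f) := by
        rw [Matrix.rank, ← Matrix.toLin'_apply', Matrix.toLin'_toMatrix']
      rw [h1, h2, h3]
    refine ⟨fun i => T (C i), ?_⟩
    intro i j hij
    rw [hT_sub, hT_rank]
    exact hC i j hij

/-- Existence of a large family (repetitions allowed) of `k`-dimensional
subspaces of `F_q^n`, any `α` distinct members of which span a subspace of dimension
at least `δ + k`; a lower bound on the size of covering Grassmannian codes. -/
theorem stmt_4 (F : Type*) [Field F] [Fintype F]
    (n k δ α : ℕ) (hδ1 : 1 ≤ δ) (hδk : δ ≤ k) (hkn : k + δ ≤ n) (hα : 2 ≤ α) :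
    ∃ W : Fin ((α - 1) * Fintype.card F ^ (max k (n - k) * (min k (n - k) - δ + 1))) →
        Submodule F (Fin n → F),
      (∀ i, Module.finrank F (W i) = k) ∧
      ∀ I : Finset
          (Fin ((α - 1) * Fintype.card F ^ (max k (n - k) * (min k (n - k) - δ + 1)))),
        I.card = α → δ + k ≤ Module.finrank F ↥(I.sup W) := by
  classical
  set m := n - k with hm
  have hδm : δ ≤ m := by omega
  have hkm : k + m = n := by omega
  set q := Fintype.card F with hq
  set K := max k m * (min k m - δ + 1) with hK
  set M := q ^ K with hM
  have hM0 : 0 < M := Nat.pow_pos Fintype.card_pos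
  have hα1 : 0 < α - 1 := by omega
  obtain ⟨C, hC⟩ := exists_rank_code' F k m δ hδ1 hδk hδm
  -- the linear equivalence (Fin k → F) × (Fin m → F) ≃ₗ (Fin n → F)
  set eqv : Fin n ≃ (Fin k ⊕ Fin m) := (finCongr hkm.symm).trans finSumFinEquiv.symm with heqv
  set E : ((Fin k → F) × (Fin m → F)) ≃ₗ[F] (Fin n → F) :=
    (LinearEquiv.sumArrowLequivProdArrow (Fin k) (Fin m) F F).symm ≪≫ₗ
      LinearEquiv.funCongrLeft F F eqv with hE
  set Wof : ((Fin k → F) →ₗ[F] (Fin m → F)) → Submodule F (Fin n → F) := fun ψ =>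
    LinearMap.range (E.toLinearMap ∘ₗ LinearMap.prod LinearMap.id ψ) with hWof
  have hinj : ∀ ψ : (Fin k → F) →ₗ[F] (Fin m → F),
      Function.Injective (E.toLinearMap ∘ₗ LinearMap.prod LinearMap.id ψ) := by
    intro ψ x y hxy
    have := E.injective hxy
    exact congrArg Prod.fst this
  have hWof_rank : ∀ ψ, Module.finrank F (Wof ψ) = k := by
    intro ψ
    rw [hWof]
    rw [LinearMap.finrank_range_of_inj (hinj ψ), Module.finrank_fin_fun]
  -- key pair bound
  have key : ∀ ψ φ : (Fin k → F) →ₗ[F] (Fin m → F),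
      δ ≤ Module.finrank F (LinearMap.range (ψ - φ)) →
      δ + k ≤ Module.finrank F ↥(Wof ψ ⊔ Wof φ) := by
    intro ψ φ hr
    set Z : Submodule F (Fin n → F) :=
      Submodule.map (E.toLinearMap ∘ₗ LinearMap.inr F (Fin k → F) (Fin m → F))
        (LinearMap.range (ψ - φ)) with hZ
    have hinr_inj : Function.Injective
        (E.toLinearMap ∘ₗ LinearMap.inr F (Fin k → F) (Fin m → F)) := by
      intro x y hxy
      have := E.injective hxy
      exact congrArg Prod.snd this
    have hZrank : Module.finrank F Z = Module.finrank F (LinearMap.range (ψ - φ)) :=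
      (LinearEquiv.finrank_eq (Submodule.equivMapOfInjective _ hinr_inj _)).symm
    have hZW : Z ⊓ Wof ψ = ⊥ := by
      rw [eq_bot_iff]
      rintro x hx
      obtain ⟨hx1, hx2⟩ := Submodule.mem_inf.mp hx
      obtain ⟨u, -, rfl⟩ := hx1
      obtain ⟨v, hv⟩ := hx2
      have hpair : ((v, ψ v) : (Fin k → F) × (Fin m → F)) = (0, u) := E.injective hv
      have hv0 : v = 0 := congrArg Prod.fst hpair
      have hu0 : u = 0 := by
        have := congrArg Prod.snd hpair
        simp only at this
        rw [← this, hv0, map_zero]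
      rw [Submodule.mem_bot]
      simp [hu0]
    have hZle : Z ⊔ Wof ψ ≤ Wof ψ ⊔ Wof φ := by
      refine sup_le ?_ le_sup_left
      rintro x hx
      obtain ⟨u, ⟨w, rfl⟩, rfl⟩ := hx
      have hsplit : (E.toLinearMap ∘ₗ LinearMap.inr F (Fin k → F) (Fin m → F)) ((ψ - φ) w)
          = (E.toLinearMap ∘ₗ LinearMap.prod LinearMap.id ψ) w
            - (E.toLinearMap ∘ₗ LinearMap.prod LinearMap.id φ) w := by
        simp only [LinearMap.comp_apply, LinearMap.inr_apply, LinearMap.prod_apply,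
          LinearMap.sub_apply, LinearMap.id_apply, Pi.prod]
        rw [← map_sub E.toLinearMap]
        congr 1
        simp [Prod.mk_sub_mk]
      rw [hsplit]
      exact sub_mem (Submodule.mem_sup_left ⟨w, rfl⟩) (Submodule.mem_sup_right ⟨w, rfl⟩)
    have hsum := Submodule.finrank_sup_add_finrank_inf_eq Z (Wof ψ)
    rw [hZW, finrank_bot, add_zero] at hsum
    have hmono : Module.finrank F ↥(Z ⊔ Wof ψ) ≤ Module.finrank F ↥(Wof ψ ⊔ Wof φ) :=
      Submodule.finrank_mono hZle
    have h1 := hWof_rank ψ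
    omega
  -- the family with repetitions
  set π : Fin ((α - 1) * M) → Fin M := fun i =>
    ⟨(i : ℕ) / (α - 1), by
      rw [Nat.div_lt_iff_lt_mul hα1]
      exact lt_of_lt_of_eq i.2 (Nat.mul_comm _ _)⟩ with hπ
  refine ⟨fun i => Wof (C (π i)), fun i => hWof_rank _, ?_⟩
  intro I hI
  -- find two indices with distinct code elements
  have hpigeon : ∃ i ∈ I, ∃ j ∈ I, π i ≠ π j := by
    by_contra hcon
    push_neg at hcon
    have hcardle : I.card ≤ α - 1 := by
      have hmaps : ∀ x ∈ I, (x : ℕ) % (α - 1) ∈ Finset.range (α - 1) :=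
        fun x _ => Finset.mem_range.mpr (Nat.mod_lt _ hα1)
      have hinj2 : ∀ x ∈ I, ∀ y ∈ I,
          (x : ℕ) % (α - 1) = (y : ℕ) % (α - 1) → x = y := by
        intro x hx y hy hxy
        have hdiv : (x : ℕ) / (α - 1) = (y : ℕ) / (α - 1) :=
          congrArg Fin.val (hcon x hx y hy)
        have : (x : ℕ) = (y : ℕ) := by
          have e1 := Nat.div_add_mod (x : ℕ) (α - 1)
          have e2 := Nat.div_add_mod (y : ℕ) (α - 1)
          rw [hdiv] at e1
          omega
        exact Fin.ext this
      have := Finset.card_le_card_of_injOn _ hmaps hinj2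
      simpa using this
    omega
  obtain ⟨i, hi, j, hj, hij⟩ := hpigeon
  have hkey := key (C (π i)) (C (π j)) (hC _ _ hij)
  refine le_trans hkey ?_
  refine Submodule.finrank_mono ?_
  exact sup_le (Finset.le_sup (f := fun i => Wof (C (π i))) hi)
    (Finset.le_sup (f := fun i => Wof (C (π i))) hj)
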